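/- Adequacy for the simply-typed λ-calculus in the Krivine machine: if Γ ⊢ t : A and σ is a substitution such that σ(x) ∈ |B| for every (x:B) ∈ Γ, then t[σ] ∈ |A|. -/

import Mathlib

/-- λ-terms in de Bruijn representation. -/
inductive Tm where
  | var : Nat → Tm
  | lam : Tm → Tm
  | app : Tm → Tm → Tm

/-- Shift free variables ≥ d by one. -/
def Tm.shift (d : Nat) : Tm → Tm
  | .var n => if n < d then .var n else .var (n + 1)
  | .lam t => .lam (t.shift (d + 1))
  | .app t u => .app (t.shift d) (u.shift d)

/-- Substitute `u` for variable `k` (capture-avoiding, de Bruijn). -/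
def Tm.subst (k : Nat) (u : Tm) : Tm → Tm
  | .var n => if n < k then .var n else if n = k then u else .var (n - 1)
  | .lam t => .lam (Tm.subst (k + 1) (u.shift 0) t)
  | .app t v => .app (Tm.subst k u t) (Tm.subst k u v)

/-- `t[u/x]` for the outermost variable. -/
def Tm.subst0 (t u : Tm) : Tm := Tm.subst 0 u t

/-- KAM contexts (stacks). -/
inductive Ctx where
  | star : Ctx
  | cons : Tm → Ctx → Ctx

/-- KAM machine configurations ⟨t | e⟩. -/
structure Machine where
  tm : Tm
  ctx : Ctx

/-- KAM machine reduction. -/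
inductive Step : Machine → Machine → Prop
  | app (t u : Tm) (e : Ctx) : Step ⟨.app t u, e⟩ ⟨t, .cons u e⟩
  | lam (t u : Tm) (e : Ctx) : Step ⟨.lam t, .cons u e⟩ ⟨t.subst0 u, e⟩


/-- Simultaneous (parallel) substitution. -/
def Tm.psubst (σ : Nat → Tm) : Tm → Tm
  | .var n => σ n
  | .lam t => .lam (Tm.psubst (fun n => match n with
      | 0 => .var 0
      | n + 1 => (σ n).shift 0) t)
  | .app t u => .app (Tm.psubst σ t) (Tm.psubst σ u)

/-- Simple types: a base type and function types. -/
inductive Ty where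
  | base : Ty
  | arrow : Ty → Ty → Ty

/-- Typing judgment of the simply-typed λ-calculus (de Bruijn contexts). -/
inductive HasTy : List Ty → Tm → Ty → Prop
  | var {Γ n A} : Γ[n]? = some A → HasTy Γ (.var n) A
  | lam {Γ t A B} : HasTy (A :: Γ) t B → HasTy Γ (.lam t) (.arrow A B)
  | app {Γ t u A B} : HasTy Γ t (.arrow A B) → HasTy Γ u A → HasTy Γ (.app t u) B

/-- Orthogonal of a set of terms. -/
def orthC (pole : Machine → Prop) (S : Set Tm) : Set Ctx := {e | ∀ t ∈ S, pole ⟨t, e⟩}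

/-- Orthogonal of a set of contexts. -/
def orthT (pole : Machine → Prop) (S : Set Ctx) : Set Tm := {t | ∀ e ∈ S, pole ⟨t, e⟩}

/-- Truth witnesses: |A→B| = { t | ∀ u ∈ |A|, ∀ e ∈ ‖B‖, ⟨t | u·e⟩ ∈ ⫫ },
with ‖B‖ = |B|⊥, and an arbitrary interpretation at the base type. -/
def tru (pole : Machine → Prop) (baseTru : Set Tm) : Ty → Set Tm
  | .base => baseTru
  | .arrow A B =>
      {t | ∀ u ∈ tru pole baseTru A, ∀ e ∈ orthC pole (tru pole baseTru B),
        pole ⟨t, .cons u e⟩}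

/-- Falsity witnesses: ‖A‖ = |A|⊥. -/
def fal (pole : Machine → Prop) (baseTru : Set Tm) (A : Ty) : Set Ctx :=
  orthC pole (tru pole baseTru A)

lemma Tm.shift_shift (u : Tm) : ∀ d d', d' ≤ d →
    (u.shift d').shift (d+1) = (u.shift d).shift d' := by
  induction u with
  | var n =>
    intro d d' h; simp only [Tm.shift]
    split_ifs <;> simp only [Tm.shift] <;> split_ifs <;>
      first | rfl | omega | (exact absurd ‹_› (by omega)) | (congr 1; omega)
  | lam t ih => intro d d' h; simp only [Tm.shift]; rw [ih (d+1) (d'+1) (by omega)]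
  | app t u iht ihu => intro d d' h; simp only [Tm.shift]; rw [iht _ _ h, ihu _ _ h]

lemma Tm.subst_shift_cancel (s : Tm) : ∀ k u, Tm.subst k u (s.shift k) = s := by
  induction s with
  | var n =>
    intro k u; simp only [Tm.shift]
    split_ifs <;> simp only [Tm.subst] <;> split_ifs <;>
      first | rfl | omega | (exact absurd ‹_› (by omega)) | (congr 1; omega)
  | lam t ih => intro k u; simp only [Tm.shift, Tm.subst]; rw [ih]
  | app t v iht ihv => intro k u; simp only [Tm.shift, Tm.subst]; rw [iht, ihv]

lemma Tm.shift_subst (s : Tm) : ∀ k u d, d ≤ k →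
    (Tm.subst k u s).shift d = Tm.subst (k+1) (u.shift d) (s.shift d) := by
  induction s with
  | var n =>
    intro k u d h; simp only [Tm.subst, Tm.shift]
    split_ifs <;> simp only [Tm.subst, Tm.shift] <;> split_ifs <;>
      first | rfl | omega | (exact absurd ‹_› (by omega)) | (congr 1; omega)
  | lam t ih =>
    intro k u d h; simp only [Tm.subst, Tm.shift]
    rw [ih (k+1) (u.shift 0) (d+1) (by omega), Tm.shift_shift u d 0 (by omega)]
  | app t v iht ihv =>
    intro k u d h; simp only [Tm.subst, Tm.shift]; rw [iht _ _ _ h, ihv _ _ _ h]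

lemma Tm.psubst_subst (t : Tm) : ∀ (σ : Nat → Tm) k u,
    Tm.subst k u (Tm.psubst σ t) = Tm.psubst (fun n => Tm.subst k u (σ n)) t := by
  induction t with
  | var n => intro σ k u; rfl
  | lam t ih =>
    intro σ k u
    simp only [Tm.psubst, Tm.subst]
    rw [ih]
    have h : (fun n => Tm.subst (k+1) (u.shift 0) (match n with
        | 0 => Tm.var 0
        | n + 1 => (σ n).shift 0))
        = (fun n => match n with
        | 0 => Tm.var 0
        | n + 1 => (Tm.subst k u (σ n)).shift 0) := by
      funext n
      match n with
      | 0 => simp [Tm.subst]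
      | n + 1 =>
        simp only
        rw [Tm.shift_subst (σ n) k u 0 (by omega)]
    rw [h]
  | app t v iht ihv =>
    intro σ k u; simp only [Tm.psubst, Tm.subst]; rw [iht, ihv]

lemma tru_biorth (pole : Machine → Prop) (baseTru : Set Tm)
    (hbase : baseTru = orthT pole (orthC pole baseTru)) (A : Ty) (t : Tm)
    (h : ∀ e ∈ orthC pole (tru pole baseTru A), pole ⟨t, e⟩) :
    t ∈ tru pole baseTru A := by
  cases A with
  | base =>
    rw [tru, hbase]
    exact fun e he => h e he
  | arrow A B =>
    intro u hu e he
    exact h (.cons u e) (fun s hs => hs u hu e he)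

/-- Adequacy: if Γ ⊢ t : A and σ(x) ∈ |B| for every (x:B) ∈ Γ, then t[σ] ∈ |A|. -/
theorem adequacy (pole : Machine → Prop)
    (hpole : ∀ m m', Step m m' → pole m' → pole m)
    (baseTru : Set Tm) (hbase : baseTru = orthT pole (orthC pole baseTru))
    {Γ : List Ty} {t : Tm} {A : Ty} (ht : HasTy Γ t A)
    (σ : Nat → Tm) (hσ : ∀ n B, Γ[n]? = some B → σ n ∈ tru pole baseTru B) :
    Tm.psubst σ t ∈ tru pole baseTru A := by
  induction ht generalizing σ with
  | @var Γ n A h => exact hσ n A h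
  | @lam Γ t A B ht ih =>
    intro u hu e he
    apply hpole _ _ (Step.lam _ u e)
    have : (Tm.psubst (fun n => match n with
        | 0 => .var 0
        | n + 1 => (σ n).shift 0) t).subst0 u
        = Tm.psubst (fun n => match n with | 0 => u | n + 1 => σ n) t := by
      rw [Tm.subst0, Tm.psubst_subst]
      congr 1
      funext n
      match n with
      | 0 => simp [Tm.subst]
      | n + 1 => exact Tm.subst_shift_cancel (σ n) 0 u
    rw [this]
    refine he _ (ih _ ?_)
    intro n B' hB'
    match n with
    | 0 =>
      simp only [List.getElem?_cons_zero] at hB'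
      exact (Option.some.inj hB') ▸ hu
    | n + 1 => exact hσ n B' hB'
  | @app Γ t u A B ht hu iht ihu =>
    apply tru_biorth pole baseTru hbase
    intro e he
    apply hpole _ _ (Step.app _ _ _)
    exact iht σ hσ (Tm.psubst σ u) (ihu σ hσ) e he
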